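/- Let C be the closure of the class of odd wheels {W_{2n+1} : n ≥ 1} under taking subgraphs and disjoint unions. The sentence φ defining the presence of a free induced bouquet of cycles is preserved under homomorphisms over C: if G, H ∈ C, G ⊨ φ, and there is a homomorphism G → H, then H ⊨ φ. -/

import Mathlib

/-- The wheel graph `W n`: an `n`-cycle on `Fin n` together with an apex vertex
(the `Sum.inr` vertex) adjacent to every cycle vertex. -/
def wheel (n : ℕ) : SimpleGraph (Fin n ⊕ Unit) :=
  SimpleGraph.fromRel (fun u v =>
    match u, v with
    | Sum.inl i, Sum.inl j => ((i : ℕ) + 1) % n = (j : ℕ)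
    | Sum.inl _, Sum.inr _ => True
    | _, _ => False)

/-- The disjoint union of the wheels `W (ns i)` for `i : Fin k`. -/
def wheelSum (k : ℕ) (ns : Fin k → ℕ) :
    SimpleGraph (Σ i : Fin k, Fin (ns i) ⊕ Unit) :=
  SimpleGraph.fromRel (fun u v => ∃ h : u.1 = v.1, (wheel (ns v.1)).Adj (h ▸ u.2) v.2)

/-- Membership in the closure `C` of the odd wheels `{W (2n+1) : n ≥ 1}` under taking
subgraphs and disjoint unions: `G ∈ C` iff `G` is (isomorphic to) a subgraph of a finite
disjoint union of odd wheels. -/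
def InC {V : Type} (G : SimpleGraph V) : Prop :=
  ∃ (k : ℕ) (ns : Fin k → ℕ), (∀ i, 3 ≤ ns i ∧ Odd (ns i)) ∧
    ∃ f : V → Σ i : Fin k, Fin (ns i) ⊕ Unit, Function.Injective f ∧
      ∀ u v, G.Adj u v → (wheelSum k ns).Adj (f u) (f v)

/-- The first-order condition `φ` defining the presence of a free induced bouquet of
cycles: there is a vertex `x` of degree at least `1` such that every vertex `z ≠ x` at
distance at most `2` from `x` is adjacent to `x` and has exactly two neighbours other
than `x`. -/
def phiCond {V : Type} (G : SimpleGraph V) : Prop :=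
  ∃ x y, G.Adj x y ∧ ∀ z, z ≠ x → (G.Adj x z ∨ ∃ w, G.Adj x w ∧ G.Adj w z) →
    G.Adj x z ∧ ∃ u v, u ≠ v ∧ u ≠ x ∧ v ≠ x ∧ G.Adj z u ∧ G.Adj z v ∧
      ∀ w, G.Adj z w → w = u ∨ w = v ∨ w = x

set_option linter.unusedSectionVars false

open scoped Fin.CommRing Fin.NatCast

section Aux
open Sum

lemma wheel_adj_inl_inr {n : ℕ} (i : Fin n) (u : Unit) : (wheel n).Adj (.inl i) (.inr u) := by
  simp [wheel, SimpleGraph.fromRel_adj]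

lemma wheel_not_adj_inr {n : ℕ} (u v : Unit) : ¬ (wheel n).Adj (.inr u) (.inr v) := by
  simp [wheel, SimpleGraph.fromRel_adj]

lemma wheel_adj_inl_inl {n : ℕ} {i j : Fin n} :
    (wheel n).Adj (.inl i) (.inl j) ↔ i ≠ j ∧ (((i:ℕ)+1) % n = j ∨ ((j:ℕ)+1) % n = i) := by
  simp [wheel, SimpleGraph.fromRel_adj]

lemma wheelSum_adj_fst {k ns} {u v : Σ i : Fin k, Fin (ns i) ⊕ Unit}
    (h : (wheelSum k ns).Adj u v) : u.1 = v.1 := by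
  rw [wheelSum, SimpleGraph.fromRel_adj] at h
  rcases h.2 with ⟨h', _⟩ | ⟨h', _⟩
  · exact h'
  · exact h'.symm

lemma wheelSum_adj_mk {k ns} {i : Fin k} {a b : Fin (ns i) ⊕ Unit} :
    (wheelSum k ns).Adj ⟨i,a⟩ ⟨i,b⟩ ↔ (wheel (ns i)).Adj a b := by
  rw [wheelSum, SimpleGraph.fromRel_adj]
  constructor
  · rintro ⟨hne, ⟨h, ha⟩ | ⟨h, ha⟩⟩
    · exact ha
    · exact ha.symm
  · intro h
    exact ⟨fun heq => h.ne (by simpa using heq), Or.inl ⟨rfl, h⟩⟩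

section finfacts
variable {m : ℕ} [NeZero m]

lemma fin_val_one (h : 3 ≤ m) : (1 : Fin m).val = 1 := by
  rw [Fin.val_one']; exact Nat.mod_eq_of_lt (by omega)

lemma fin_one_ne_zero (h : 3 ≤ m) : (1 : Fin m) ≠ 0 := by
  intro he
  have := congrArg Fin.val he
  rw [fin_val_one h, Fin.val_zero] at this
  omega

lemma fin_two_ne_zero (h : 3 ≤ m) : (1 + 1 : Fin m) ≠ 0 := by
  intro he
  have := congrArg Fin.val he
  rw [Fin.val_add, fin_val_one h, Fin.val_zero, Nat.mod_eq_of_lt (by omega)] at this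
  omega

lemma fin_three_eq (h : 3 ≤ m) (he : (1 + 1 + 1 : Fin m) = 0) : m = 3 := by
  have := congrArg Fin.val he
  rw [Fin.val_add, Fin.val_add, fin_val_one h, Fin.val_zero,
    Nat.mod_eq_of_lt (show 1+1 < m by omega)] at this
  have hd : m ∣ 3 := Nat.dvd_of_mod_eq_zero this
  have := Nat.le_of_dvd (by omega) hd
  omega

lemma fin_val_add_one (h3 : 3 ≤ m) {i : Fin m} (h : i + 1 ≠ 0) : (i + 1).val = i.val + 1 := by
  rw [Fin.val_add, fin_val_one h3]
  have hi := i.isLt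
  rcases Nat.lt_or_ge (i.val + 1) m with hlt | hge
  · exact Nat.mod_eq_of_lt hlt
  · exfalso
    have hm : i.val + 1 = m := by omega
    apply h
    rw [Fin.ext_iff, Fin.val_add, fin_val_one h3, hm, Nat.mod_self, Fin.val_zero]
end finfacts

section more
variable {m : ℕ} [NeZero m]

lemma fin_succ_ne_self (h3 : 3 ≤ m) (i : Fin m) : i + 1 ≠ i := by
  intro he
  have : i + 1 = i + 0 := by rw [he, add_zero]
  exact fin_one_ne_zero h3 (add_left_cancel this)

lemma fin_pred_ne_self (h3 : 3 ≤ m) (i : Fin m) : i - 1 ≠ i := by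
  intro he
  rw [sub_eq_iff_eq_add] at he
  exact fin_one_ne_zero h3 (add_left_cancel (by rw [← he, add_zero] : i + 0 = i + 1)).symm

lemma fin_succ_ne_pred (h3 : 3 ≤ m) (i : Fin m) : i + 1 ≠ i - 1 := by
  intro he
  apply fin_two_ne_zero h3
  have : i + (1 + 1) = i + 0 := by
    rw [add_zero, ← add_assoc, he]; ring
  exact add_left_cancel this
end more

section wheelmore
open Sum
variable {n : ℕ} [NeZero n]

lemma fin_succ_iff (h3 : 3 ≤ n) {i j : Fin n} : ((i:ℕ)+1) % n = (j:ℕ) ↔ j = i + 1 := by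
  rw [show (j = i + 1) ↔ (j.val = (i+1).val) from Fin.ext_iff, Fin.val_add, fin_val_one h3]
  exact eq_comm

lemma wheel_adj_inl_iff (h3 : 3 ≤ n) {i j : Fin n} :
    (wheel n).Adj (.inl i) (.inl j) ↔ j = i + 1 ∨ j = i - 1 := by
  rw [wheel_adj_inl_inl, fin_succ_iff h3, fin_succ_iff h3]
  constructor
  · rintro ⟨hne, h | h⟩
    · exact Or.inl h
    · right; rw [eq_sub_iff_add_eq]; exact h.symm
  · rintro (h | h)
    · refine ⟨fun he => ?_, Or.inl h⟩
      rw [← he] at h; exact fin_succ_ne_self h3 i h.symm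
    · refine ⟨fun he => ?_, Or.inr ?_⟩
      · rw [← he] at h; exact fin_pred_ne_self h3 i h.symm
      · rw [eq_sub_iff_add_eq] at h; exact h.symm

lemma wheel_adj_succ (h3 : 3 ≤ n) (i : Fin n) : (wheel n).Adj (.inl i) (.inl (i+1)) :=
  (wheel_adj_inl_iff h3).2 (Or.inl rfl)

lemma wheel_adj_inl_cases (h3 : 3 ≤ n) {i : Fin n} {a : Fin n ⊕ Unit}
    (h : (wheel n).Adj (.inl i) a) :
    a = .inr () ∨ a = .inl (i + 1) ∨ a = .inl (i - 1) := by
  rcases a with j | u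
  · rcases (wheel_adj_inl_iff h3).1 h with h' | h'
    · exact Or.inr (Or.inl (by rw [h']))
    · exact Or.inr (Or.inr (by rw [h']))
  · exact Or.inl rfl

lemma wheel_adj_inr_cases {a : Fin n ⊕ Unit} {u : Unit}
    (h : (wheel n).Adj (.inr u) a) : ∃ j, a = .inl j := by
  rcases a with j | v
  · exact ⟨j, rfl⟩
  · exact absurd h (wheel_not_adj_inr u v)
end wheelmore

lemma cycle_walk_covers {m : ℕ} (h3 : 3 ≤ m) {n : ℕ} (hodd : Odd n)
    (p : ℕ → Fin m) (hper : p n = p 0)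
    (hstep : ∀ t, haveI : NeZero m := ⟨by omega⟩; p (t+1) = p t + 1 ∨ p (t+1) = p t - 1)
    (j : Fin m) :
    haveI : NeZero m := ⟨by omega⟩
    ∃ t, (p t = j ∧ p (t+1) = j + 1) ∨ (p t = j + 1 ∧ p (t+1) = j) := by
  haveI : NeZero m := ⟨by omega⟩
  by_contra hcon
  push_neg at hcon
  set d : ℕ → ℕ := fun t => (p t - (j+1)).val with hd
  have hflip : ∀ t, d (t+1) = d t + 1 ∨ (d (t+1) + 1 = d t ∧ 1 ≤ d t) := by
    intro t
    rcases hstep t with h | h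
    · left
      have hpj : p t ≠ j := by
        intro he
        exact ((hcon t).1 he) (by rw [h, he])
      show (p (t+1) - (j+1)).val = (p t - (j+1)).val + 1
      have he1 : p (t+1) - (j+1) = (p t - (j+1)) + 1 := by rw [h]; ring
      rw [he1]
      apply fin_val_add_one h3
      intro h0
      apply hpj
      have : p t - (j + 1) = -1 := eq_neg_of_add_eq_zero_left h0
      have : p t = j := by rw [sub_eq_iff_eq_add] at this; rw [this]; ring
      exact this
    · right
      have hpj : p t ≠ j + 1 := by
        intro he
        refine ((hcon t).2 he) ?_
        rw [h, he]; ring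
      have hne : p t - (j+1) ≠ 0 := sub_ne_zero.2 hpj
      have he1 : (p (t+1) - (j+1)) + 1 = p t - (j+1) := by rw [h]; ring
      constructor
      · show (p (t+1) - (j+1)).val + 1 = (p t - (j+1)).val
        rw [← he1]
        exact (fin_val_add_one h3 (by rw [he1]; exact hne)).symm
      · show 1 ≤ (p t - (j+1)).val
        rcases Nat.eq_zero_or_pos (p t - (j+1)).val with h0 | h0
        · exact absurd (Fin.ext h0 : p t - (j+1) = ⟨0, by omega⟩) (by
            intro hh
            apply hne
            rw [hh]; rfl)
        · exact h0
  have hpar : ∀ t, (d t + t) % 2 = d 0 % 2 := by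
    intro t
    induction t with
    | zero => rfl
    | succ s ih =>
      rcases hflip s with h | ⟨h, h'⟩ <;> omega
  have hdn : d n = d 0 := by simp only [hd, hper]
  have := hpar n
  rcases hodd with ⟨c, hc⟩
  omega

end Aux

section cover
open Sum

lemma phiCond_of_cover {W : Type} {H : SimpleGraph W} {k : ℕ} {ns : Fin k → ℕ}
    (hns : ∀ i, 3 ≤ ns i ∧ Odd (ns i))
    {e : W → Σ i : Fin k, Fin (ns i) ⊕ Unit} (einj : Function.Injective e)
    (he : ∀ u v, H.Adj u v → (wheelSum k ns).Adj (e u) (e v))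
    {x' : W} {i₁ : Fin k} (hx' : e x' = ⟨i₁, .inr ()⟩)
    (Z : Fin (ns i₁) → W)
    (hZ : ∀ j, e (Z j) = ⟨i₁, .inl j⟩)
    (hxZ : ∀ j, H.Adj x' (Z j))
    (hZZ : ∀ j, haveI : NeZero (ns i₁) := ⟨by have := (hns i₁).1; omega⟩;
      H.Adj (Z j) (Z (j+1))) : phiCond H := by
  have h3 : 3 ≤ ns i₁ := (hns i₁).1
  haveI : NeZero (ns i₁) := ⟨by omega⟩
  refine ⟨x', Z 0, hxZ 0, ?_⟩
  intro z hzx hdist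
  -- step 1 : e z = ⟨i₁, inl j⟩ for some j
  have hz : ∃ j : Fin (ns i₁), e z = ⟨i₁, .inl j⟩ := by
    have key : ∀ w, H.Adj x' w → ∃ j : Fin (ns i₁), e w = ⟨i₁, .inl j⟩ := by
      intro w hw
      have h1 := he _ _ hw
      rcases hew : e w with ⟨iw, b⟩
      rw [hx', hew] at h1
      have hfst : i₁ = iw := wheelSum_adj_fst h1
      subst hfst
      rw [wheelSum_adj_mk] at h1
      obtain ⟨jw, hjw⟩ := wheel_adj_inr_cases h1
      exact ⟨jw, by rw [hjw]⟩
    rcases hdist with h | ⟨w, hw1, hw2⟩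
    · exact key z h
    · obtain ⟨jw, hjw⟩ := key w hw1
      have h1 := he _ _ hw2
      rcases hez : e z with ⟨iz, b⟩
      rw [hjw, hez] at h1
      have hfst : i₁ = iz := wheelSum_adj_fst h1
      subst hfst
      rw [wheelSum_adj_mk] at h1
      rcases wheel_adj_inl_cases h3 h1 with hb | hb | hb
      · exfalso
        apply hzx
        apply einj
        rw [hez, hx', hb]
      · exact ⟨jw + 1, by rw [hb]⟩
      · exact ⟨jw - 1, by rw [hb]⟩
  obtain ⟨j, hj⟩ := hz
  have hzZ : z = Z j := einj (by rw [hj, hZ])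
  refine ⟨by rw [hzZ]; exact hxZ j, Z (j+1), Z (j-1), ?_, ?_, ?_, ?_, ?_, ?_⟩
  · intro hh
    have := congrArg e hh
    rw [hZ, hZ] at this
    have : j + 1 = j - 1 := by simpa using this
    exact fin_succ_ne_pred h3 j this
  · intro hh
    have := congrArg e hh
    rw [hZ, hx'] at this
    simp at this
  · intro hh
    have := congrArg e hh
    rw [hZ, hx'] at this
    simp at this
  · rw [hzZ]; exact hZZ j
  · rw [hzZ]
    have := hZZ (j - 1)
    rw [sub_add_cancel] at this
    exact this.symm
  · intro w hw
    have h1 := he _ _ hw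
    rcases hew : e w with ⟨iw, b⟩
    rw [hj, hew] at h1
    have hfst : i₁ = iw := wheelSum_adj_fst h1
    subst hfst
    rw [wheelSum_adj_mk] at h1
    rcases wheel_adj_inl_cases h3 h1 with hb | hb | hb
    · right; right
      apply einj; rw [hew, hx', hb]
    · left
      apply einj; rw [hew, hZ, hb]
    · right; left
      apply einj; rw [hew, hZ, hb]
end cover

lemma three_val {α : Type*} {A B C a b c x : α} (hab : a ≠ b) (hac : a ≠ c) (hbc : b ≠ c)
    (ha : a = A ∨ a = B ∨ a = C) (hb : b = A ∨ b = B ∨ b = C) (hc : c = A ∨ c = B ∨ c = C)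
    (hx : x = A ∨ x = B ∨ x = C) : x = a ∨ x = b ∨ x = c := by
  rcases ha with rfl|rfl|rfl <;> rcases hb with rfl|rfl|rfl <;> rcases hc with rfl|rfl|rfl <;>
    tauto

section walkG
open Sum

lemma exists_odd_walk {V : Type} {G : SimpleGraph V} (hG : InC G) {x y : V} (hxy : G.Adj x y)
    (hx : ∀ z, z ≠ x → (G.Adj x z ∨ ∃ w, G.Adj x w ∧ G.Adj w z) →
      G.Adj x z ∧ ∃ u v, u ≠ v ∧ u ≠ x ∧ v ≠ x ∧ G.Adj z u ∧ G.Adj z v ∧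
        ∀ w, G.Adj z w → w = u ∨ w = v ∨ w = x) :
    ∃ (n : ℕ) (z : ℕ → V), 3 ≤ n ∧ Odd n ∧ (∀ t, z (t + n) = z t) ∧
      (∀ t, G.Adj x (z t)) ∧ (∀ t, G.Adj (z t) (z (t + 1))) := by
  obtain ⟨k, ns, hns, e, einj, he⟩ := hG
  have hN2 : ∀ z u, u ≠ x → G.Adj x z → G.Adj z u → G.Adj x u :=
    fun z u hux hz hu => (hx u hux (Or.inr ⟨z, hz, hu⟩)).1
  rcases hex : e x with ⟨i, a⟩
  have h3 : 3 ≤ ns i := (hns i).1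
  have hodd : Odd (ns i) := (hns i).2
  haveI : NeZero (ns i) := ⟨by omega⟩
  rcases a with r | u0
  · -- x maps to a rim vertex: K4 situation
    obtain ⟨-, u, v, huv, hux, hvx, hyu, hyv, -⟩ := hx y hxy.ne' (Or.inl hxy)
    have hxu : G.Adj x u := hN2 y u hux hxy hyu
    have hxv : G.Adj x v := hN2 y v hvx hxy hyv
    have him : ∀ w, G.Adj x w →
        e w = ⟨i, inl (r+1)⟩ ∨ e w = ⟨i, inl (r-1)⟩ ∨ e w = ⟨i, inr ()⟩ := by
      intro w hw
      have h1 := he _ _ hw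
      rcases hew : e w with ⟨iw, b⟩
      rw [hex, hew] at h1
      have hfst : i = iw := wheelSum_adj_fst h1
      subst hfst
      rw [wheelSum_adj_mk] at h1
      rcases wheel_adj_inl_cases h3 h1 with hb | hb | hb
      · right; right; rw [hb]
      · left; rw [hb]
      · right; left; rw [hb]
    have hNfin : ∀ w, G.Adj x w → w = y ∨ w = u ∨ w = v := by
      intro w hw
      have hyu' : e y ≠ e u := fun hh => hyu.ne (einj hh)
      have hyv' : e y ≠ e v := fun hh => hyv.ne (einj hh)
      have huv' : e u ≠ e v := fun hh => huv (einj hh)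
      have : e w = e y ∨ e w = e u ∨ e w = e v :=
        three_val hyu' hyv' huv' (him y hxy) (him u hxu) (him v hxv) (him w hw)
      rcases this with h|h|h
      · exact Or.inl (einj h)
      · exact Or.inr (Or.inl (einj h))
      · exact Or.inr (Or.inr (einj h))
    obtain ⟨-, u1, u2, hu12, hu1x, hu2x, huu1, huu2, -⟩ := hx u hxu.ne' (Or.inl hxu)
    have hu1' : u1 = y ∨ u1 = v := by
      rcases hNfin u1 (hN2 u u1 hu1x hxu huu1) with h|h|h
      · exact Or.inl h
      · exact absurd h huu1.ne'
      · exact Or.inr h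
    have hu2' : u2 = y ∨ u2 = v := by
      rcases hNfin u2 (hN2 u u2 hu2x hxu huu2) with h|h|h
      · exact Or.inl h
      · exact absurd h huu2.ne'
      · exact Or.inr h
    have huvadj : G.Adj u v := by
      rcases hu1' with h1|h1 <;> rcases hu2' with h2|h2
      · exact absurd (h1.trans h2.symm) hu12
      · rw [h2] at huu2; exact huu2
      · rw [h1] at huu1; exact huu1
      · exact absurd (h1.trans h2.symm) hu12
    refine ⟨3, fun t => if t % 3 = 0 then y else if t % 3 = 1 then u else v,
      le_refl 3, ⟨1, rfl⟩, ?_, ?_, ?_⟩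
    · intro t; simp [Nat.add_mod_right]
    · intro t
      rcases (by omega : t % 3 = 0 ∨ t % 3 = 1 ∨ t % 3 = 2) with h|h|h <;>
        simp [h, hxy, hxu, hxv]
    · intro t
      rcases (by omega : t % 3 = 0 ∨ t % 3 = 1 ∨ t % 3 = 2) with h|h|h <;>
        have h1 : (t+1) % 3 = (t % 3 + 1) % 3 := by omega
      · simp [h1, h, hyu]
      · simp [h1, h, huvadj]
      · simp [h1, h, hyv.symm]
  · -- x maps to the apex
    have hnbrcoord : ∀ z, G.Adj x z → ∃ j, e z = ⟨i, inl j⟩ := by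
      intro z hz
      have h1 := he _ _ hz
      rcases hez : e z with ⟨iz, b⟩
      rw [hex, hez] at h1
      have hfst : i = iz := wheelSum_adj_fst h1
      subst hfst
      rw [wheelSum_adj_mk] at h1
      obtain ⟨j, hj⟩ := wheel_adj_inr_cases h1
      exact ⟨j, by rw [hj]⟩
    have C2 : ∀ z (j : Fin (ns i)), G.Adj x z → e z = ⟨i, inl j⟩ →
        ∃ z', G.Adj x z' ∧ G.Adj z z' ∧ e z' = ⟨i, inl (j+1)⟩ := by
      intro z j hz hej
      obtain ⟨-, u, v, huv, hux, hvx, hzu, hzv, -⟩ := hx z hz.ne' (Or.inl hz)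
      have hxu : G.Adj x u := hN2 z u hux hz hzu
      have hxv : G.Adj x v := hN2 z v hvx hz hzv
      obtain ⟨ju, hju⟩ := hnbrcoord u hxu
      obtain ⟨jv, hjv⟩ := hnbrcoord v hxv
      have h1 := he _ _ hzu
      rw [hej, hju, wheelSum_adj_mk] at h1
      have h2 := he _ _ hzv
      rw [hej, hjv, wheelSum_adj_mk] at h2
      rcases (wheel_adj_inl_iff h3).1 h1 with hu1 | hu1
      · exact ⟨u, hxu, hzu, by rw [hju, hu1]⟩
      · rcases (wheel_adj_inl_iff h3).1 h2 with hv1 | hv1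
        · exact ⟨v, hxv, hzv, by rw [hjv, hv1]⟩
        · exfalso
          apply huv
          apply einj
          rw [hju, hjv, hu1, hv1]
    obtain ⟨j₀, hj₀⟩ := hnbrcoord y hxy
    have key : ∀ t : ℕ, ∃ z, G.Adj x z ∧ e z = ⟨i, inl (j₀ + (t : Fin (ns i)))⟩ := by
      intro t
      induction t with
      | zero => exact ⟨y, hxy, by rw [hj₀]; simp⟩
      | succ s ih =>
        obtain ⟨z, hz, hez⟩ := ih
        obtain ⟨z', h1, h2, h3'⟩ := C2 z _ hz hez
        have hco : (j₀ + (s : Fin (ns i))) + 1 = j₀ + (((s+1 : ℕ)) : Fin (ns i)) := by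
          push_cast; ring
        exact ⟨z', h1, by rw [h3', hco]⟩
    refine ⟨ns i, fun t => (key t).choose, h3, hodd, ?_, fun t => (key t).choose_spec.1, ?_⟩
    · intro t
      apply einj
      rw [(key (t + ns i)).choose_spec.2, (key t).choose_spec.2]
      have hco : ((t + ns i : ℕ) : Fin (ns i)) = ((t:ℕ) : Fin (ns i)) := by
        push_cast [Fin.natCast_self]; ring
      rw [hco]
    · intro t
      obtain ⟨z', h1, h2, h3'⟩ := C2 _ _ ((key t).choose_spec.1) ((key t).choose_spec.2)
      have : (key (t+1)).choose = z' := by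
        apply einj
        rw [(key (t+1)).choose_spec.2, h3']
        have hco : (j₀ + (t : Fin (ns i))) + 1 = j₀ + (((t+1 : ℕ)) : Fin (ns i)) := by
          push_cast; ring
        rw [hco]
      show G.Adj ((key t).choose) ((key (t+1)).choose)
      rw [this]
      exact h2
end walkG

section walkH
open Sum

lemma phiCond_of_walk {W : Type} {H : SimpleGraph W} (hH : InC H) {x : W} {z : ℕ → W}
    {n : ℕ} (hodd : Odd n) (hper : ∀ t, z (t+n) = z t)
    (hxz : ∀ t, H.Adj x (z t)) (hzz : ∀ t, H.Adj (z t) (z (t+1))) : phiCond H := by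
  obtain ⟨k, ns, hns, e, einj, he⟩ := hH
  rcases hex : e x with ⟨i, a⟩
  have h3 : 3 ≤ ns i := (hns i).1
  haveI : NeZero (ns i) := ⟨by omega⟩
  have hzn : z n = z 0 := by have := hper 0; rwa [zero_add] at this
  rcases a with r | u0
  · -- x maps to a rim vertex r
    have key : ∀ t, ∃ jt : Fin (ns i),
        (e (z t) = ⟨i, inr ()⟩ ∧ jt = r) ∨
        (e (z t) = ⟨i, inl jt⟩ ∧ (jt = r + 1 ∨ jt = r - 1)) := by
      intro t
      have h1 := he _ _ (hxz t)
      rcases hez : e (z t) with ⟨iz, b⟩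
      rw [hex, hez] at h1
      have hfst : i = iz := wheelSum_adj_fst h1
      subst hfst
      rw [wheelSum_adj_mk] at h1
      rcases wheel_adj_inl_cases h3 h1 with hb | hb | hb
      · exact ⟨r, Or.inl ⟨by rw [hb], rfl⟩⟩
      · exact ⟨r + 1, Or.inr ⟨by rw [hb], Or.inl rfl⟩⟩
      · exact ⟨r - 1, Or.inr ⟨by rw [hb], Or.inr rfl⟩⟩
    set p : ℕ → Fin (ns i) := fun t => (key t).choose with hp
    have spec : ∀ t, (e (z t) = ⟨i, inr ()⟩ ∧ p t = r) ∨
        (e (z t) = ⟨i, inl (p t)⟩ ∧ (p t = r + 1 ∨ p t = r - 1)) :=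
      fun t => (key t).choose_spec
    have hstep : ∀ t, p (t+1) = p t + 1 ∨ p (t+1) = p t - 1 := by
      intro t
      have hadj := he _ _ (hzz t)
      rcases spec t with ⟨he1, hr1⟩ | ⟨he1, hr1⟩ <;>
        rcases spec (t+1) with ⟨he2, hr2⟩ | ⟨he2, hr2⟩
      · rw [he1, he2, wheelSum_adj_mk] at hadj
        exact absurd hadj (wheel_not_adj_inr _ _)
      · rw [hr1]
        rcases hr2 with h|h
        · left; rw [h]
        · right; rw [h]
      · rw [hr2]
        rcases hr1 with h|h
        · right; rw [h]; ring
        · left; rw [h]; ring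
      · rw [he1, he2, wheelSum_adj_mk] at hadj
        exact (wheel_adj_inl_iff h3).1 hadj
    have hpper : p n = p 0 := by
      rcases spec n with ⟨he1, hr1⟩ | ⟨he1, hr1⟩ <;>
        rcases spec 0 with ⟨he2, hr2⟩ | ⟨he2, hr2⟩
      · rw [hr1, hr2]
      · rw [hzn, he2] at he1; simpa using he1
      · rw [hzn, he2] at he1; simpa using he1
      · rw [hzn, he2] at he1
        have : p 0 = p n := by simpa using he1
        exact this.symm
    have covers := fun j => cycle_walk_covers h3 hodd p hpper hstep j
    have hdecode_apex : ∀ t, p t = r → e (z t) = ⟨i, inr ()⟩ := by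
      intro t h
      rcases spec t with ⟨h1, _⟩|⟨h1, hr1⟩
      · exact h1
      · exfalso
        rcases hr1 with h2|h2
        · rw [h] at h2; exact fin_succ_ne_self h3 r h2.symm
        · rw [h] at h2; exact fin_pred_ne_self h3 r h2.symm
    have hdecode_rim : ∀ t, p t ≠ r → e (z t) = ⟨i, inl (p t)⟩ := by
      intro t h
      rcases spec t with ⟨h1, hr1⟩|⟨h1, _⟩
      · exact absurd hr1 h
      · exact h1
    have hs1ne : r + 1 ≠ r := fin_succ_ne_self h3 r
    have hs2ne : r + 1 + 1 ≠ r + 1 := fin_succ_ne_self h3 (r+1)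
    have hval : ∀ t, p t = r ∨ p t = r + 1 ∨ p t = r - 1 := by
      intro t
      rcases spec t with ⟨_, h⟩|⟨_, h⟩
      · exact Or.inl h
      · exact Or.inr h
    -- the wheel has exactly 3 rim vertices
    obtain ⟨t1, ht1⟩ := covers (r + 1)
    have hs : ∃ s, p s = r + 1 + 1 := by
      rcases ht1 with ⟨h1,h2⟩|⟨h1,h2⟩
      exacts [⟨t1+1, h2⟩, ⟨t1, h1⟩]
    obtain ⟨s, hs⟩ := hs
    have hm3 : ns i = 3 := by
      rcases hval s with h|h|h
      · have hrr : r + 1 + 1 = r := hs.symm.trans h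
        exfalso
        apply fin_two_ne_zero h3
        apply add_left_cancel (a := r)
        rw [add_zero, ← add_assoc]
        exact hrr
      · exact absurd (hs.symm.trans h) hs2ne
      · have hrr : r + 1 + 1 = r - 1 := hs.symm.trans h
        apply fin_three_eq h3
        apply add_left_cancel (a := r)
        rw [add_zero, show r + (1+1+1) = r + 1 + 1 + 1 by ring, hrr]
        exact sub_add_cancel r 1
    have hs2ne' : r + 1 + 1 ≠ r := by
      intro hrr
      apply fin_two_ne_zero h3
      apply add_left_cancel (a := r)
      rw [add_zero, ← add_assoc]
      exact hrr
    have h111 : r + 1 + 1 + 1 = r := by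
      have hv : (1 + 1 + 1 : Fin (ns i)).val = 0 := by
        rw [Fin.val_add, Fin.val_add, fin_val_one h3,
          Nat.mod_eq_of_lt (show 1+1 < ns i by omega), hm3]
      have h0 : (1 + 1 + 1 : Fin (ns i)) = 0 := by
        rw [Fin.ext_iff, hv, Fin.val_zero]
      rw [show r + 1 + 1 + 1 = r + (1+1+1) by ring, h0, add_zero]
    have htri : ∀ j : Fin (ns i), j = r ∨ j = r + 1 ∨ j = r + 1 + 1 := by
      intro j
      have hlt : (j - r).val < 3 := hm3 ▸ (j - r).isLt
      have h1v : (1 : Fin (ns i)).val = 1 := fin_val_one h3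
      have h2v : (1 + 1 : Fin (ns i)).val = 2 := by
        rw [Fin.val_add, h1v, Nat.mod_eq_of_lt (by omega)]
      have hj : j = r + (j - r) := by ring
      rcases (by omega : (j-r).val = 0 ∨ (j-r).val = 1 ∨ (j-r).val = 2) with h|h|h
      · left
        rw [hj, show (j - r) = (0 : Fin (ns i)) by rw [Fin.ext_iff, h, Fin.val_zero], add_zero]
      · right; left
        rw [hj, show (j - r) = (1 : Fin (ns i)) by rw [Fin.ext_iff, h, h1v]]
      · right; right
        rw [hj, show (j - r) = (1 + 1 : Fin (ns i)) by rw [Fin.ext_iff, h, h2v], ← add_assoc]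
    -- extract the three edges
    obtain ⟨ta, hta⟩ := covers r
    have hAB : ∃ sA sB, p sA = r ∧ p sB = r + 1 ∧ H.Adj (z sA) (z sB) := by
      rcases hta with ⟨h1,h2⟩|⟨h1,h2⟩
      exacts [⟨ta, ta+1, h1, h2, hzz ta⟩, ⟨ta+1, ta, h2, h1, (hzz ta).symm⟩]
    obtain ⟨sA, sB, hpA, hpB, hadjAB⟩ := hAB
    have hBC : ∃ sB' sC, p sB' = r + 1 ∧ p sC = r + 1 + 1 ∧ H.Adj (z sB') (z sC) := by
      rcases ht1 with ⟨h1,h2⟩|⟨h1,h2⟩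
      exacts [⟨t1, t1+1, h1, h2, hzz t1⟩, ⟨t1+1, t1, h2, h1, (hzz t1).symm⟩]
    obtain ⟨sB', sC, hpB', hpC, hadjBC⟩ := hBC
    obtain ⟨tc, htc⟩ := covers (r + 1 + 1)
    rw [h111] at htc
    have hCA : ∃ sC' sA', p sC' = r + 1 + 1 ∧ p sA' = r ∧ H.Adj (z sC') (z sA') := by
      rcases htc with ⟨h1,h2⟩|⟨h1,h2⟩
      exacts [⟨tc, tc+1, h1, h2, hzz tc⟩, ⟨tc+1, tc, h2, h1, (hzz tc).symm⟩]
    obtain ⟨sC', sA', hpC', hpA', hadjCA⟩ := hCA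
    -- identifications
    have heA : e (z sA) = ⟨i, inr ()⟩ := hdecode_apex sA hpA
    have heB : e (z sB) = ⟨i, inl (r+1)⟩ := by
      have := hdecode_rim sB (by rw [hpB]; exact hs1ne)
      rwa [hpB] at this
    have heC : e (z sC) = ⟨i, inl (r+1+1)⟩ := by
      have := hdecode_rim sC (by rw [hpC]; exact hs2ne')
      rwa [hpC] at this
    have hB'B : z sB' = z sB := by
      apply einj
      have := hdecode_rim sB' (by rw [hpB']; exact hs1ne)
      rw [this, hpB', heB]
    have hA'A : z sA' = z sA := by
      apply einj
      rw [hdecode_apex sA' hpA', heA]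
    have hC'C : z sC' = z sC := by
      apply einj
      have := hdecode_rim sC' (by rw [hpC']; exact hs2ne')
      rw [this, hpC', heC]
    rw [hB'B] at hadjBC
    rw [hC'C, hA'A] at hadjCA
    -- the covering family
    set Z : Fin (ns i) → W := fun j => if j = r then x else if j = r + 1 then z sB else z sC
      with hZdef
    have hZr : Z r = x := by rw [hZdef]; simp
    have hZB : Z (r+1) = z sB := by rw [hZdef]; simp [hs1ne]
    have hZC : Z (r+1+1) = z sC := by rw [hZdef]; simp [hs2ne', hs2ne]
    apply phiCond_of_cover hns einj he (x' := z sA) (i₁ := i) heA Z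
    · intro j
      rcases htri j with rfl|rfl|rfl
      · rw [hZr, hex]
      · rw [hZB, heB]
      · rw [hZC, heC]
    · intro j
      rcases htri j with rfl|rfl|rfl
      · rw [hZr]; exact (hxz sA).symm
      · rw [hZB]; exact hadjAB
      · rw [hZC]; exact hadjCA.symm
    · intro j
      rcases htri j with rfl|rfl|rfl
      · rw [hZr, hZB]; exact hxz sB
      · rw [hZB, hZC]; exact hadjBC
      · rw [h111, hZC, hZr]; exact (hxz sC).symm
  · -- x maps to the apex
    have hexr : e x = ⟨i, inr ()⟩ := by rw [hex]
    have key : ∀ t, ∃ jt : Fin (ns i), e (z t) = ⟨i, inl jt⟩ := by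
      intro t
      have h1 := he _ _ (hxz t)
      rcases hez : e (z t) with ⟨iz, b⟩
      rw [hexr, hez] at h1
      have hfst : i = iz := wheelSum_adj_fst h1
      subst hfst
      rw [wheelSum_adj_mk] at h1
      obtain ⟨j, hj⟩ := wheel_adj_inr_cases h1
      exact ⟨j, by rw [hj]⟩
    set p : ℕ → Fin (ns i) := fun t => (key t).choose with hp
    have spec : ∀ t, e (z t) = ⟨i, inl (p t)⟩ := fun t => (key t).choose_spec
    have hstep : ∀ t, p (t+1) = p t + 1 ∨ p (t+1) = p t - 1 := by
      intro t
      have hadj := he _ _ (hzz t)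
      rw [spec t, spec (t+1), wheelSum_adj_mk] at hadj
      exact (wheel_adj_inl_iff h3).1 hadj
    have hpper : p n = p 0 := by
      have h1 := spec n
      rw [hzn, spec 0] at h1
      have : p 0 = p n := by simpa using h1
      exact this.symm
    have covers := fun j => cycle_walk_covers h3 hodd p hpper hstep j
    have hcov : ∀ j : Fin (ns i), ∃ w', H.Adj x w' ∧ e w' = ⟨i, inl j⟩ := by
      intro j
      obtain ⟨t, ht⟩ := covers j
      rcases ht with ⟨h1,h2⟩|⟨h1,h2⟩
      · exact ⟨z t, hxz t, by rw [spec t, h1]⟩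
      · exact ⟨z (t+1), hxz (t+1), by rw [spec (t+1), h2]⟩
    set Z : Fin (ns i) → W := fun j => (hcov j).choose with hZdef
    have hZ : ∀ j, e (Z j) = ⟨i, inl j⟩ := fun j => (hcov j).choose_spec.2
    have hxZ : ∀ j, H.Adj x (Z j) := fun j => (hcov j).choose_spec.1
    apply phiCond_of_cover hns einj he (x' := x) (i₁ := i) hexr Z hZ hxZ
    intro j
    obtain ⟨t, ht⟩ := covers j
    rcases ht with ⟨h1,h2⟩|⟨h1,h2⟩
    · have e1 : Z j = z t := einj (by rw [hZ, spec t, h1])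
      have e2 : Z (j+1) = z (t+1) := einj (by rw [hZ, spec (t+1), h2])
      rw [e1, e2]
      exact hzz t
    · have e1 : Z j = z (t+1) := einj (by rw [hZ, spec (t+1), h2])
      have e2 : Z (j+1) = z t := einj (by rw [hZ, spec t, h1])
      rw [e1, e2]
      exact (hzz t).symm
end walkH

/-- The sentence `φ` is preserved under homomorphisms over the closure
`C` of the odd wheels under subgraphs and disjoint unions. -/
theorem phi_hom_preserved_over_C {V W : Type} (G : SimpleGraph V) (H : SimpleGraph W)
    (hG : InC G) (hH : InC H) (f : G →g H) (hφ : phiCond G) : phiCond H := by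
  obtain ⟨x, y, hxy, hx⟩ := hφ
  obtain ⟨n, z, h3, hodd, hper, hxz, hzz⟩ := exists_odd_walk hG hxy hx
  exact phiCond_of_walk hH (z := fun t => f (z t)) hodd
    (fun t => congrArg f (hper t)) (fun t => f.map_adj (hxz t)) (fun t => f.map_adj (hzz t))
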